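/- Let θ > 0 be real. For every x ∈ (0, 1) there exists a unique φ ∈ (0, π/(θ+1)) such that x = (θ^θ/(1+θ)^{1+θ}) · (sin((θ+1)φ))^{θ+1} / ( sin(φ) · (sin(θφ))^{θ} ). -/

import Mathlib

open Real Set Filter Topology

noncomputable def gf (t : ℝ) : ℝ := t * Real.cos t / Real.sin t

lemma gf_deriv {t : ℝ} (ht : t ∈ Set.Ioo 0 Real.pi) :
    HasDerivAt gf ((Real.sin t * Real.cos t - t) / Real.sin t ^ 2) t := by
  have hs : Real.sin t ≠ 0 := ne_of_gt (Real.sin_pos_of_pos_of_lt_pi ht.1 ht.2)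
  have h1 : HasDerivAt (fun t : ℝ => t * Real.cos t) (1 * Real.cos t + t * (-Real.sin t)) t :=
    (hasDerivAt_id t).mul (Real.hasDerivAt_cos t)
  have h2 := h1.div (Real.hasDerivAt_sin t) hs
  refine h2.congr_deriv ?_
  have h3 := Real.sin_sq_add_cos_sq t
  rw [div_left_inj' (pow_ne_zero 2 hs)]
  linear_combination (-t) * h3

lemma gf_anti : StrictAntiOn gf (Set.Ioo 0 Real.pi) := by
  apply strictAntiOn_of_deriv_neg (convex_Ioo 0 Real.pi)
  · exact fun t ht => ((gf_deriv ht).continuousAt).continuousWithinAt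
  · rw [interior_Ioo]
    intro t ht
    rw [(gf_deriv ht).deriv]
    apply div_neg_of_neg_of_pos
    · have h2t : Real.sin (2 * t) < 2 * t := Real.sin_lt (by linarith [ht.1])
      rw [Real.sin_two_mul] at h2t
      nlinarith
    · exact pow_pos (Real.sin_pos_of_pos_of_lt_pi ht.1 ht.2) 2

/-- the trigonometric parametrisation of `(0,1)` used for the global
density of the Jacobi Muttalib–Borodin ensemble: every `x ∈ (0,1)` is obtained from a
unique `φ ∈ (0, π/(θ+1))`. -/
theorem stmt_15 (θ : ℝ) (hθ : 0 < θ) (x : ℝ) (hx : x ∈ Set.Ioo (0 : ℝ) 1) :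
    ∃! φ : ℝ, φ ∈ Set.Ioo 0 (Real.pi / (θ + 1)) ∧
      x = θ ^ θ / (1 + θ) ^ (1 + θ) *
        (Real.sin ((θ + 1) * φ) ^ (θ + 1) / (Real.sin φ * Real.sin (θ * φ) ^ θ)) := by
  have hθ1 : (0:ℝ) < θ + 1 := by linarith
  set P : ℝ := Real.pi / (θ + 1) with hPdef
  have hP : 0 < P := div_pos Real.pi_pos hθ1
  have hPpi : P < Real.pi := div_lt_self Real.pi_pos (by linarith)
  set C : ℝ := θ ^ θ / (1 + θ) ^ (1 + θ) with hCdef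
  have hC : 0 < C := div_pos (Real.rpow_pos_of_pos hθ θ) (Real.rpow_pos_of_pos (by linarith) _)
  set F : ℝ → ℝ := fun φ => C *
      (Real.sin ((θ + 1) * φ) ^ (θ + 1) / (Real.sin φ * Real.sin (θ * φ) ^ θ)) with hFdef
  set G : ℝ → ℝ := fun φ => (θ + 1) * Real.log (Real.sin ((θ + 1) * φ))
      - Real.log (Real.sin φ) - θ * Real.log (Real.sin (θ * φ)) with hGdef
  -- basic facts on the interval
  have hfacts : ∀ φ ∈ Set.Ioo (0:ℝ) P,
      0 < Real.sin φ ∧ 0 < Real.sin ((θ+1)*φ) ∧ 0 < Real.sin (θ*φ) ∧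
      φ ∈ Set.Ioo (0:ℝ) Real.pi ∧ ((θ+1)*φ) ∈ Set.Ioo (0:ℝ) Real.pi ∧
      (θ*φ) ∈ Set.Ioo (0:ℝ) Real.pi := by
    intro φ hφ
    obtain ⟨h0, h1⟩ := hφ
    have hA : (θ+1)*φ < Real.pi := by
      rw [hPdef] at h1
      calc (θ+1)*φ < (θ+1)*(Real.pi/(θ+1)) := by
            exact mul_lt_mul_of_pos_left h1 hθ1
        _ = Real.pi := by field_simp
    have hApos : 0 < (θ+1)*φ := mul_pos hθ1 h0
    have hBpos : 0 < θ*φ := mul_pos hθ h0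
    have hB : θ*φ < Real.pi := by nlinarith
    have hφπ : φ < Real.pi := by nlinarith
    exact ⟨Real.sin_pos_of_pos_of_lt_pi h0 hφπ, Real.sin_pos_of_pos_of_lt_pi hApos hA,
      Real.sin_pos_of_pos_of_lt_pi hBpos hB, ⟨h0, hφπ⟩, ⟨hApos, hA⟩, ⟨hBpos, hB⟩⟩
  -- F = C * exp (G ·) on the interval
  have hFG : ∀ φ ∈ Set.Ioo (0:ℝ) P, F φ = C * Real.exp (G φ) := by
    intro φ hφ
    obtain ⟨hs1, hs2, hs3, -, -, -⟩ := hfacts φ hφ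
    rw [hFdef, hGdef]
    simp only
    rw [Real.exp_sub, Real.exp_sub, mul_comm (θ+1) (Real.log (Real.sin ((θ+1)*φ))),
      mul_comm θ (Real.log (Real.sin (θ*φ))), ← Real.rpow_def_of_pos hs2,
      ← Real.rpow_def_of_pos hs3, Real.exp_log hs1]
    rw [div_div]
  -- derivative of G
  have hGderiv : ∀ φ ∈ Set.Ioo (0:ℝ) P, HasDerivAt G
      ((θ+1) * (Real.cos ((θ+1)*φ) * ((θ+1)*1) / Real.sin ((θ+1)*φ))
        - Real.cos φ / Real.sin φ
        - θ * (Real.cos (θ*φ) * (θ*1) / Real.sin (θ*φ))) φ := by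
    intro φ hφ
    obtain ⟨hs1, hs2, hs3, -, -, -⟩ := hfacts φ hφ
    have d1 : HasDerivAt (fun φ : ℝ => Real.log (Real.sin ((θ+1)*φ)))
        (Real.cos ((θ+1)*φ) * ((θ+1)*1) / Real.sin ((θ+1)*φ)) φ :=
      (((hasDerivAt_id φ).const_mul (θ+1)).sin).log hs2.ne'
    have d2 : HasDerivAt (fun φ : ℝ => Real.log (Real.sin φ))
        (Real.cos φ / Real.sin φ) φ := (Real.hasDerivAt_sin φ).log hs1.ne'
    have d3 : HasDerivAt (fun φ : ℝ => Real.log (Real.sin (θ*φ)))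
        (Real.cos (θ*φ) * (θ*1) / Real.sin (θ*φ)) φ :=
      (((hasDerivAt_id φ).const_mul θ).sin).log hs3.ne'
    exact ((d1.const_mul (θ+1)).sub d2).sub (d3.const_mul θ)
  -- G strictly decreasing
  have hGA : StrictAntiOn G (Set.Ioo 0 P) := by
    apply strictAntiOn_of_deriv_neg (convex_Ioo 0 P)
    · exact fun φ hφ => ((hGderiv φ hφ).continuousAt).continuousWithinAt
    · rw [interior_Ioo]
      intro φ hφ
      rw [(hGderiv φ hφ).deriv]
      obtain ⟨hs1, hs2, hs3, hm1, hm2, hm3⟩ := hfacts φ hφ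
      have k1 : gf ((θ+1)*φ) < gf φ := gf_anti hm1 hm2 (by nlinarith [hφ.1])
      have k2 : gf ((θ+1)*φ) < gf (θ*φ) := gf_anti hm3 hm2 (by nlinarith [hφ.1])
      have key : (θ+1) * gf ((θ+1)*φ) < gf φ + θ * gf (θ*φ) := by nlinarith
      have hrw : (θ+1) * (Real.cos ((θ+1)*φ) * ((θ+1)*1) / Real.sin ((θ+1)*φ))
          - Real.cos φ / Real.sin φ
          - θ * (Real.cos (θ*φ) * (θ*1) / Real.sin (θ*φ))
          = ((θ+1) * gf ((θ+1)*φ) - gf φ - θ * gf (θ*φ)) / φ := by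
        have hφ0 : φ ≠ 0 := ne_of_gt hφ.1
        simp only [gf]
        field_simp
      rw [hrw]
      exact div_neg_of_neg_of_pos (by linarith) hφ.1
  -- F strictly decreasing and continuous
  have hFA : StrictAntiOn F (Set.Ioo 0 P) := by
    intro a ha b hb hab
    rw [hFG a ha, hFG b hb]
    exact mul_lt_mul_of_pos_left (Real.exp_lt_exp.2 (hGA ha hb hab)) hC
  have hGcont : ContinuousOn G (Set.Ioo 0 P) :=
    fun φ hφ => ((hGderiv φ hφ).continuousAt).continuousWithinAt
  have hFcont : ContinuousOn F (Set.Ioo 0 P) :=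
    (continuousOn_const.mul (Real.continuous_exp.comp_continuousOn hGcont)).congr
      (fun φ hφ => hFG φ hφ)
  -- limit of sin y / y at 0
  have hmem0 : Set.Ioo (0:ℝ) P ∈ 𝓝[>] (0:ℝ) := Ioo_mem_nhdsGT hP
  have hslope : Tendsto (fun y : ℝ => Real.sin y / y) (𝓝[≠] (0:ℝ)) (𝓝 1) := by
    have h := hasDerivAt_iff_tendsto_slope.mp (Real.hasDerivAt_sin 0)
    rw [Real.cos_zero] at h
    refine h.congr (fun y => ?_)
    rw [slope_def_field, Real.sin_zero, sub_zero, sub_zero]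
  have hsinc : ∀ c : ℝ, 0 < c →
      Tendsto (fun φ : ℝ => Real.sin (c*φ) / φ) (𝓝[>] (0:ℝ)) (𝓝 c) := by
    intro c hc
    have hmap : Tendsto (fun φ : ℝ => c*φ) (𝓝[>] (0:ℝ)) (𝓝[≠] (0:ℝ)) := by
      apply tendsto_nhdsWithin_of_tendsto_nhds_of_eventually_within
      · have h : Tendsto (fun φ : ℝ => c*φ) (𝓝 (0:ℝ)) (𝓝 (c*0)) :=
          (continuous_const.mul continuous_id).tendsto 0
        rw [mul_zero] at h
        exact h.mono_left nhdsWithin_le_nhds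
      · filter_upwards [self_mem_nhdsWithin] with φ hφ
        have : (0:ℝ) < φ := hφ
        simp only [Set.mem_compl_iff, Set.mem_singleton_iff]
        exact ne_of_gt (mul_pos hc this)
    have h1 := hslope.comp hmap
    have h2 := h1.const_mul c
    rw [mul_one] at h2
    refine Tendsto.congr' ?_ h2
    filter_upwards [self_mem_nhdsWithin] with φ hφ
    have hφ0 : φ ≠ 0 := ne_of_gt hφ
    have hc0 : c ≠ 0 := ne_of_gt hc
    simp only [Function.comp]
    field_simp
  -- limit of G at 0+
  have hK : Tendsto G (𝓝[>] (0:ℝ))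
      (𝓝 ((θ+1) * Real.log (θ+1) - Real.log 1 - θ * Real.log θ)) := by
    have t1 := ((Real.continuousAt_log (ne_of_gt hθ1)).tendsto.comp (hsinc (θ+1) hθ1)).const_mul (θ+1)
    have t2 := (Real.continuousAt_log (ne_of_gt one_pos)).tendsto.comp (hsinc 1 one_pos)
    have t3 := ((Real.continuousAt_log (ne_of_gt hθ)).tendsto.comp (hsinc θ hθ)).const_mul θ
    have hcomb := (t1.sub t2).sub t3
    refine Tendsto.congr' ?_ hcomb
    filter_upwards [hmem0] with φ hφ
    obtain ⟨hs1, hs2, hs3, -, -, -⟩ := hfacts φ hφ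
    have hφ0 : φ ≠ 0 := ne_of_gt hφ.1
    simp only [Function.comp, hGdef, one_mul]
    rw [Real.log_div hs2.ne' hφ0, Real.log_div hs1.ne' hφ0, Real.log_div hs3.ne' hφ0]
    ring
  -- F tends to 1 at 0+
  have hF1 : Tendsto F (𝓝[>] (0:ℝ)) (𝓝 1) := by
    have h := (Real.continuous_exp.tendsto _).comp hK
    have h2 := h.const_mul C
    have hval : C * Real.exp ((θ+1) * Real.log (θ+1) - Real.log 1 - θ * Real.log θ) = 1 := by
      rw [Real.log_one, Real.exp_sub, Real.exp_sub, Real.exp_zero,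
        mul_comm (θ+1) (Real.log (θ+1)), mul_comm θ (Real.log θ),
        ← Real.rpow_def_of_pos hθ1, ← Real.rpow_def_of_pos hθ, hCdef,
        show (1:ℝ)+θ = θ+1 from add_comm 1 θ]
      have e1 : (θ:ℝ) ^ θ ≠ 0 := (Real.rpow_pos_of_pos hθ θ).ne'
      have e2 : (θ+1:ℝ) ^ (θ+1) ≠ 0 := (Real.rpow_pos_of_pos hθ1 (θ+1)).ne'
      field_simp
    rw [hval] at h2
    refine Tendsto.congr' ?_ h2
    filter_upwards [hmem0] with φ hφ
    exact (hFG φ hφ).symm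
  -- F tends to 0 at P-
  have hmemP : Set.Ioo (0:ℝ) P ∈ 𝓝[<] P := Ioo_mem_nhdsLT hP
  have hsinPA : Tendsto (fun φ : ℝ => Real.sin ((θ+1)*φ)) (𝓝[<] P) (𝓝[>] 0) := by
    apply tendsto_nhdsWithin_of_tendsto_nhds_of_eventually_within
    · have hc : Continuous fun φ : ℝ => Real.sin ((θ+1)*φ) :=
        Real.continuous_sin.comp (continuous_const.mul continuous_id)
      have h := (hc.tendsto P).mono_left (nhdsWithin_le_nhds (s := Set.Iio P))
      have hPv : Real.sin ((θ+1)*P) = 0 := by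
        rw [hPdef, mul_div_cancel₀ _ (ne_of_gt hθ1), Real.sin_pi]
      rwa [hPv] at h
    · filter_upwards [hmemP] with φ hφ
      exact (hfacts φ hφ).2.1
  have hsinP : 0 < Real.sin P := Real.sin_pos_of_pos_of_lt_pi hP hPpi
  have hsinθP : 0 < Real.sin (θ*P) := by
    apply Real.sin_pos_of_pos_of_lt_pi (mul_pos hθ hP)
    rw [hPdef, mul_div_assoc', div_lt_iff₀ hθ1]
    nlinarith [Real.pi_pos]
  have hGbot : Tendsto G (𝓝[<] P) atBot := by
    have t1 : Tendsto (fun φ : ℝ => Real.log (Real.sin ((θ+1)*φ))) (𝓝[<] P) atBot :=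
      Real.tendsto_log_nhdsGT_zero.comp hsinPA
    have t1' := t1.const_mul_atBot hθ1
    have h2 : ContinuousAt (fun φ : ℝ => Real.log (Real.sin φ)) P :=
      ((Real.hasDerivAt_sin P).log hsinP.ne').continuousAt
    have h3 : ContinuousAt (fun φ : ℝ => Real.log (Real.sin (θ*φ))) P :=
      ((((hasDerivAt_id P).const_mul θ).sin).log hsinθP.ne').continuousAt
    have c2 : ContinuousAt (fun φ : ℝ => -Real.log (Real.sin φ) - θ * Real.log (Real.sin (θ*φ))) P :=
      h2.neg.sub (continuousAt_const.mul h3)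
    have t2 := c2.tendsto.mono_left (nhdsWithin_le_nhds (s := Set.Iio P))
    have h := t2.add_atBot t1'
    refine Tendsto.congr (fun φ => ?_) h
    simp only [hGdef]
    ring
  have hFP : Tendsto F (𝓝[<] P) (𝓝 0) := by
    have h := (Real.tendsto_exp_atBot.comp hGbot).const_mul C
    rw [mul_zero] at h
    refine Tendsto.congr' ?_ h
    filter_upwards [hmemP] with φ hφ
    exact (hFG φ hφ).symm
  -- pick endpoints
  obtain ⟨a, hax, haI⟩ : ∃ a, x < F a ∧ a ∈ Set.Ioo 0 P := by
    have h1 : ∀ᶠ φ in 𝓝[>] (0:ℝ), x < F φ := hF1.eventually (eventually_gt_nhds hx.2)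
    exact (h1.and (Filter.eventually_of_mem hmem0 (fun y hy => hy))).exists
  obtain ⟨b, hbx, hbI⟩ : ∃ b, F b < x ∧ b ∈ Set.Ioo 0 P := by
    have h1 : ∀ᶠ φ in 𝓝[<] P, F φ < x := hFP.eventually (eventually_lt_nhds hx.1)
    exact (h1.and (Filter.eventually_of_mem hmemP (fun y hy => hy))).exists
  have hab : a < b := by
    by_contra hcon
    push_neg at hcon
    rcases eq_or_lt_of_le hcon with h | h
    · rw [h] at hbx; linarith
    · have := hFA hbI haI h
      linarith
  have hsub : Set.Icc a b ⊆ Set.Ioo 0 P :=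
    fun t ht => ⟨lt_of_lt_of_le haI.1 ht.1, lt_of_le_of_lt ht.2 hbI.2⟩
  obtain ⟨φ, hφm, hφeq⟩ := intermediate_value_Icc' hab.le (hFcont.mono hsub)
    ⟨le_of_lt hbx, le_of_lt hax⟩
  have hφI : φ ∈ Set.Ioo 0 P := hsub hφm
  refine ⟨φ, ⟨hφI, hφeq.symm⟩, ?_⟩
  rintro ψ ⟨hψI, hψeq⟩
  exact hFA.injOn hψI hφI (hψeq.symm.trans hφeq.symm)
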